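/- arXiv:1408.3225 — 3 statements merged into one kernel-verified Lean document; each statement's English description precedes it below -/
import Mathlib

section
/- Let a₁, a₂ be positive integers coprime to a positive integer b. Then 12·s(a₁,b) - 12·s(a₂,b) is an integer if and only if b divides (a₁-a₂)(a₁a₂-1). -/
/-- The sawtooth function ((x)) = x - ⌊x⌋ - 1/2 for non-integer x, and 0 for integer x. -/
def saw (x : ℚ) : ℚ := if x.den = 1 then 0 else x - ⌊x⌋ - 1/2

/-- The Dedekind sum s(a,b) = Σ_{k=1}^{b-1} ((k/b))((ka/b)). -/
def dedekindSum (a b : ℕ) : ℚ :=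
  ∑ k ∈ Finset.range b, saw ((k : ℚ) / b) * saw ((k * a : ℚ) / b)

/-- I(a,b): the number of inversions of the permutation x ↦ ax mod b on {0,...,b-1}. -/
def inv' (a b : ℕ) : ℕ :=
  (((Finset.range b) ×ˢ (Finset.range b)).filter
    (fun p => p.1 < p.2 ∧ (a * p.2) % b < (a * p.1) % b)).card

namespace DedekindAux

/-- k ↦ k*a % b permutes range b when gcd(a,b)=1. -/
lemma sum_perm {M : Type*} [AddCommMonoid M] (g : ℕ → M) {a b : ℕ}
    (h : Nat.Coprime a b) :
    ∑ k ∈ Finset.range b, g ((k * a) % b) = ∑ k ∈ Finset.range b, g k := by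
  rcases Nat.lt_or_ge b 2 with hb | hb
  · interval_cases b <;> simp
  · obtain ⟨a', -, ha'⟩ := Nat.exists_mul_mod_eq_one_of_coprime h hb
    have hbpos : 0 < b := by omega
    refine Finset.sum_nbij' (fun k => (k * a) % b) (fun k => (k * a') % b)
      (fun k _ => Finset.mem_range.mpr (Nat.mod_lt _ hbpos))
      (fun k _ => Finset.mem_range.mpr (Nat.mod_lt _ hbpos)) ?_ ?_ (fun k _ => rfl)
    · intro k hk
      show (k * a) % b * a' % b = k
      have : (k * a) % b * a' % b = k * (a * a') % b := by
        rw [Nat.mod_mul_mod, mul_assoc]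
      rw [this, Nat.mul_mod, ha', mul_one, Nat.mod_mod_of_dvd _ dvd_rfl,
        Nat.mod_eq_of_lt (Finset.mem_range.mp hk)]
    · intro k hk
      show (k * a') % b * a % b = k
      have : (k * a') % b * a % b = k * (a * a') % b := by
        rw [Nat.mod_mul_mod, mul_assoc, mul_comm a' a]
      rw [this, Nat.mul_mod, ha', mul_one, Nat.mod_mod_of_dvd _ dvd_rfl,
        Nat.mod_eq_of_lt (Finset.mem_range.mp hk)]

end DedekindAux

lemma saw_eq {k b : ℕ} (hb : 0 < b) (h : ¬ b ∣ k) :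
    saw ((k : ℚ)/b) = ((k % b : ℕ) : ℚ)/b - 1/2 := by
  have hb0 : (b : ℚ) ≠ 0 := Nat.cast_ne_zero.mpr hb.ne'
  have hden : ((k : ℚ)/b).den ≠ 1 := by
    intro hd
    have h2 : ((((k:ℚ)/b).num : ℚ)) = (k:ℚ)/b := (Rat.den_eq_one_iff _).mp hd
    have hzb : ((((k:ℚ)/b).num : ℚ)) * b = k := by rw [h2]; field_simp
    have hzi : (k : ℤ) = b * ((k:ℚ)/b).num := by
      have : ((b * ((k:ℚ)/b).num : ℤ) : ℚ) = (k:ℚ) := by push_cast; linarith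
      exact_mod_cast this.symm
    exact h (Int.natCast_dvd_natCast.mp ⟨_, hzi⟩)
  have hk : (k:ℚ) = b * ((k/b : ℕ):ℚ) + ((k % b : ℕ):ℚ) := by
    exact_mod_cast (Nat.div_add_mod k b).symm
  have hmlt : ((k % b : ℕ):ℚ) < b := by exact_mod_cast Nat.mod_lt _ hb
  have hm0 : (0:ℚ) ≤ ((k % b : ℕ):ℚ) := by positivity
  have hfloor : ⌊(k:ℚ)/b⌋ = ((k / b : ℕ) : ℤ) := by
    rw [Int.floor_eq_iff]
    constructor
    · rw [le_div_iff₀ (by positivity), Int.cast_natCast]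
      linarith
    · rw [div_lt_iff₀ (by positivity), Int.cast_natCast]
      linarith
  rw [saw, if_neg hden, hfloor, Int.cast_natCast]
  field_simp
  linarith

def Ssum (a b : ℕ) : ℕ := ∑ k ∈ Finset.range b, k * ((k * a) % b)
def Qsum (a b : ℕ) : ℕ := ∑ k ∈ Finset.range b, (k * a / b)^2

lemma lemA {a b : ℕ} (hb : 0 < b) (h : Nat.Coprime a b) :
    dedekindSum a b = (Ssum a b : ℚ)/(b:ℚ)^2 - ((b:ℚ)-1)/4 := by
  have hb0 : (b : ℚ) ≠ 0 := Nat.cast_ne_zero.mpr hb.ne'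
  set g : ℕ → ℚ := fun k =>
    (((k % b : ℕ):ℚ)/b - 1/2) * ((((k*a) % b : ℕ):ℚ)/b - 1/2) with hg
  have h0mem : (0:ℕ) ∈ Finset.range b := Finset.mem_range.mpr hb
  have hsaw0 : saw ((0:ℕ):ℚ) = 0 := by norm_num [saw]
  have e0 : dedekindSum a b
      = ∑ k ∈ (Finset.range b).erase 0, saw ((k : ℚ) / b) * saw ((k * a : ℚ) / b) := by
    rw [dedekindSum, Finset.sum_erase_eq_sub h0mem]
    norm_num [saw]
  have e1 : ∑ k ∈ (Finset.range b).erase 0, saw ((k : ℚ) / b) * saw ((k * a : ℚ) / b)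
      = ∑ k ∈ (Finset.range b).erase 0, g k := by
    refine Finset.sum_congr rfl ?_
    intro k hk
    have hk0 : k ≠ 0 := (Finset.mem_erase.mp hk).1
    have hklt : k < b := Finset.mem_range.mp (Finset.mem_erase.mp hk).2
    have hnd : ¬ b ∣ k := fun hd =>
      absurd (Nat.le_of_dvd (Nat.pos_of_ne_zero hk0) hd) (by omega)
    have hnd2 : ¬ b ∣ k * a := fun hd => hnd (h.symm.dvd_of_dvd_mul_right hd)
    have hc : ((k * a : ℕ):ℚ) = (k:ℚ) * a := by push_cast; ring
    rw [saw_eq hb hnd, ← hc, saw_eq hb hnd2]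
  have e2 : ∑ k ∈ (Finset.range b).erase 0, g k = (∑ k ∈ Finset.range b, g k) - 1/4 := by
    rw [Finset.sum_erase_eq_sub h0mem]
    have : g 0 = 1/4 := by norm_num [hg]
    rw [this]
  have e3 : ∑ k ∈ Finset.range b, g k
      = ∑ k ∈ Finset.range b,
          ((k:ℚ) * (((k*a) % b : ℕ):ℚ)/(b:ℚ)^2 - (k:ℚ)/(2*b)
            - ((((k*a) % b : ℕ):ℚ))/(2*b) + 1/4) := by
    refine Finset.sum_congr rfl ?_
    intro k hk
    have hklt : k < b := Finset.mem_range.mp hk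
    rw [hg]
    simp only [Nat.mod_eq_of_lt hklt]
    field_simp
    ring
  have gauss : ∑ k ∈ Finset.range b, (k:ℚ) = (b:ℚ)*((b:ℚ)-1)/2 := by
    have h2 := congrArg (Nat.cast : ℕ → ℚ) (Finset.sum_range_id_mul_two b)
    push_cast [Nat.cast_sub (Nat.one_le_iff_ne_zero.mpr hb.ne')] at h2
    linarith
  have hperm : ∑ k ∈ Finset.range b, ((((k*a) % b : ℕ)):ℚ)
      = ∑ k ∈ Finset.range b, (k:ℚ) := DedekindAux.sum_perm (fun n => (n:ℚ)) h
  have hS : ∑ k ∈ Finset.range b, (k:ℚ) * (((k*a) % b : ℕ):ℚ) = (Ssum a b : ℚ) := by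
    rw [Ssum]
    push_cast
    rfl
  rw [e0, e1, e2, e3]
  rw [Finset.sum_add_distrib, Finset.sum_sub_distrib, Finset.sum_sub_distrib,
    ← Finset.sum_div, ← Finset.sum_div, ← Finset.sum_div, Finset.sum_const,
    Finset.card_range, hperm, gauss, hS]
  field_simp
  ring

lemma six_sum_sq (b : ℕ) :
    6 * ∑ k ∈ Finset.range b, (k:ℤ)^2 = b * ((b:ℤ)-1) * (2*(b:ℤ)-1) := by
  induction b with
  | zero => simp
  | succ n ih =>
    rw [Finset.sum_range_succ]
    push_cast
    push_cast at ih
    ring_nf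
    ring_nf at ih
    linarith

lemma lemB {a b : ℕ} (hb : 0 < b) (h : Nat.Coprime a b) :
    2 * (a:ℤ) * (Ssum a b : ℤ) + (b:ℤ)^2 * (Qsum a b : ℤ)
      = ((a:ℤ)^2 + 1) * ∑ k ∈ Finset.range b, (k:ℤ)^2 := by
  have hr2 : ∑ k ∈ Finset.range b, (((k*a) % b : ℕ):ℤ)^2
      = ∑ k ∈ Finset.range b, (k:ℤ)^2 :=
    DedekindAux.sum_perm (fun n => (n:ℤ)^2) h
  have hS : (Ssum a b : ℤ) = ∑ k ∈ Finset.range b, (k:ℤ) * (((k*a) % b : ℕ):ℤ) := by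
    rw [Ssum]; push_cast; rfl
  have hQ : (Qsum a b : ℤ) = ∑ k ∈ Finset.range b, (((k*a/b : ℕ)):ℤ)^2 := by
    rw [Qsum]; push_cast; rfl
  rw [hS, hQ, Finset.mul_sum, Finset.mul_sum, ← Finset.sum_add_distrib,
    show ((a:ℤ)^2 + 1) * ∑ k ∈ Finset.range b, (k:ℤ)^2
      = (a:ℤ)^2 * (∑ k ∈ Finset.range b, (k:ℤ)^2)
        + ∑ k ∈ Finset.range b, (((k*a) % b : ℕ):ℤ)^2 by rw [hr2]; ring,
    Finset.mul_sum, ← Finset.sum_add_distrib]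
  refine Finset.sum_congr rfl ?_
  intro k hk
  have hdm : (b:ℤ) * ((k*a/b : ℕ):ℤ) + (((k*a) % b : ℕ):ℤ) = (k:ℤ) * a := by
    exact_mod_cast congrArg (Nat.cast : ℕ → ℤ) (Nat.div_add_mod (k*a) b)
  linear_combination ((k:ℤ)*(a:ℤ) - (((k*a) % b : ℕ):ℤ) + (b:ℤ)*((k*a/b : ℕ):ℤ)) * hdm

theorem twelve_int_iff_dvd (a₁ a₂ b : ℕ) (ha₁ : 0 < a₁) (ha₂ : 0 < a₂) (hb : 0 < b)
    (h₁ : Nat.Coprime a₁ b) (h₂ : Nat.Coprime a₂ b) :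
    (∃ n : ℤ, 12 * dedekindSum a₁ b - 12 * dedekindSum a₂ b = n) ↔
      (b : ℤ) ∣ ((a₁ : ℤ) - a₂) * ((a₁ : ℤ) * a₂ - 1) := by
  have hb0 : (b : ℚ) ≠ 0 := Nat.cast_ne_zero.mpr hb.ne'
  have hbz : (b : ℤ) ≠ 0 := Int.natCast_ne_zero.mpr hb.ne'
  set Δ : ℤ := (Ssum a₁ b : ℤ) - (Ssum a₂ b : ℤ) with hΔ
  set X : ℤ := ((a₁ : ℤ) - a₂) * ((a₁ : ℤ) * a₂ - 1) with hX
  have step1 : 12 * dedekindSum a₁ b - 12 * dedekindSum a₂ b = ((12*Δ : ℤ) : ℚ)/(b:ℚ)^2 := by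
    rw [lemA hb h₁, lemA hb h₂, hΔ]
    push_cast
    field_simp
    ring
  have iff1 : (∃ n : ℤ, 12 * dedekindSum a₁ b - 12 * dedekindSum a₂ b = n)
      ↔ (b:ℤ)^2 ∣ 12*Δ := by
    constructor
    · rintro ⟨n, hn⟩
      rw [step1, div_eq_iff (pow_ne_zero 2 hb0)] at hn
      refine ⟨n, ?_⟩
      have : ((12*Δ : ℤ) : ℚ) = (((b:ℤ)^2 * n : ℤ) : ℚ) := by push_cast; push_cast at hn; linarith
      exact_mod_cast this
    · rintro ⟨c, hc⟩
      refine ⟨c, ?_⟩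
      rw [step1, hc]
      push_cast
      field_simp
  have hcop : IsCoprime ((a₁:ℤ)*(a₂:ℤ)) ((b:ℤ)^2) := by
    rw [Int.isCoprime_iff_gcd_eq_one,
      show ((a₁:ℤ)*(a₂:ℤ)) = ((a₁*a₂ : ℕ):ℤ) by push_cast; ring,
      show ((b:ℤ)^2) = ((b^2 : ℕ):ℤ) by push_cast; ring,
      Int.gcd_natCast_natCast]
    exact (Nat.Coprime.mul h₁ h₂).pow_right 2
  have iff2 : (b:ℤ)^2 ∣ 12*Δ ↔ (b:ℤ)^2 ∣ (a₁:ℤ)*(a₂:ℤ)*(12*Δ) :=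
    ⟨fun hd => hd.mul_left _, fun hd => hcop.symm.dvd_of_dvd_mul_left hd⟩
  have hid : (a₁:ℤ)*(a₂:ℤ)*(12*Δ)
      = (b:ℤ)*(((b:ℤ)-1)*((2*(b:ℤ)-1)*X))
        - 6*(b:ℤ)^2*((a₂:ℤ)*(Qsum a₁ b : ℤ) - (a₁:ℤ)*(Qsum a₂ b : ℤ)) := by
    have hB1 := lemB hb h₁
    have hB2 := lemB hb h₂
    have hM := six_sum_sq b
    refine mul_left_cancel₀ (by norm_num : (2:ℤ) ≠ 0) ?_
    rw [hΔ, hX]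
    linear_combination (12*(a₂:ℤ))*hB1 - (12*(a₁:ℤ))*hB2 + 2*(((a₁:ℤ)-a₂)*((a₁:ℤ)*a₂-1))*hM
  have iff3 : (b:ℤ)^2 ∣ (a₁:ℤ)*(a₂:ℤ)*(12*Δ)
      ↔ (b:ℤ)^2 ∣ (b:ℤ)*(((b:ℤ)-1)*((2*(b:ℤ)-1)*X)) := by
    rw [hid]
    have h6 : (b:ℤ)^2 ∣ 6*(b:ℤ)^2*((a₂:ℤ)*(Qsum a₁ b : ℤ) - (a₁:ℤ)*(Qsum a₂ b : ℤ)) :=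
      ⟨6*((a₂:ℤ)*(Qsum a₁ b : ℤ) - (a₁:ℤ)*(Qsum a₂ b : ℤ)), by ring⟩
    constructor
    · intro hd
      have := dvd_add hd h6
      simpa using this
    · intro hd
      exact dvd_sub hd h6
  have iff4 : (b:ℤ)^2 ∣ (b:ℤ)*(((b:ℤ)-1)*((2*(b:ℤ)-1)*X))
      ↔ (b:ℤ) ∣ ((b:ℤ)-1)*((2*(b:ℤ)-1)*X) := by
    rw [sq]
    exact mul_dvd_mul_iff_left hbz
  have iff5 : (b:ℤ) ∣ ((b:ℤ)-1)*((2*(b:ℤ)-1)*X) ↔ (b:ℤ) ∣ X := by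
    have hrw : ((b:ℤ)-1)*((2*(b:ℤ)-1)*X) = (b:ℤ)*((2*(b:ℤ)-3)*X) + X := by ring
    rw [hrw]
    constructor
    · intro hd
      have := dvd_sub hd (Dvd.intro _ rfl : (b:ℤ) ∣ (b:ℤ)*((2*(b:ℤ)-3)*X))
      simpa using this
    · intro hd
      exact dvd_add (Dvd.intro _ rfl) hd
  rw [iff1, iff2, iff3, iff4, iff5]
end

section
/- Let a₁, a₂ be positive integers coprime to a positive integer b. Then 2·I(a₁,b) ≡ 2·I(a₂,b) (mod b) if and only if 6·s(a₁,b) - 6·s(a₂,b) is an integer. -/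
open Finset

lemma saw_div (m b : ℕ) (hb : 0 < b) (hnd : ¬ b ∣ m) :
    saw ((m : ℚ) / b) = ((m % b : ℕ) : ℚ) / b - 1/2 := by
  have hb0 : (b:ℚ) ≠ 0 := by positivity
  have hm : (m:ℚ) = (b:ℚ) * ((m / b : ℕ):ℚ) + ((m % b : ℕ):ℚ) := by
    exact_mod_cast (Nat.div_add_mod m b).symm
  have hx : (m : ℚ)/b = ((m / b : ℕ) : ℚ) + ((m % b : ℕ) : ℚ)/b := by
    rw [hm]; field_simp
  have h0 : 0 ≤ ((m % b : ℕ) : ℚ) / b := by positivity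
  have hlt1 : ((m % b : ℕ) : ℚ) / b < 1 := by
    rw [div_lt_one (by positivity)]
    exact_mod_cast Nat.mod_lt m hb
  have hfl : ⌊(m : ℚ)/b⌋ = ((m / b : ℕ) : ℤ) := by
    rw [hx, Int.floor_eq_iff]
    simp only [Int.cast_natCast]
    constructor
    · linarith
    · linarith
  have hden : ((m : ℚ)/b).den ≠ 1 := by
    intro h
    have h2 : ((m : ℚ)/b) = (((m : ℚ)/b).num : ℚ) := by
      conv_lhs => rw [← Rat.num_div_den ((m:ℚ)/b), h]
      simp
    apply hnd
    have h3 : (m : ℚ) = (((m : ℚ)/b).num : ℚ) * b := by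
      field_simp at h2; linarith [h2]
    have hz : (m : ℤ) = b * ((m : ℚ)/b).num := by
      rw [mul_comm]; exact_mod_cast h3
    exact Int.natCast_dvd_natCast.mp ⟨_, hz⟩
  rw [saw, if_neg hden, hfl, hx]
  simp only [Int.cast_natCast]
  ring

section Helpers
variable (a b : ℕ)

lemma mulmod_injOn (h : Nat.Coprime a b) :
    Set.InjOn (fun k => a * k % b) (range b) := by
  intro i hi j hj hij
  simp only [Finset.coe_range, Set.mem_Iio] at hi hj
  have : i ≡ j [MOD b] := by
    have : a * i ≡ a * j [MOD b] := hij
    exact (Nat.ModEq.cancel_left_of_coprime h.symm) this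
  exact Nat.ModEq.eq_of_lt_of_lt this hi hj

lemma mulmod_image (hb : 0 < b) (h : Nat.Coprime a b) :
    (range b).image (fun k => a * k % b) = range b := by
  apply Finset.eq_of_subset_of_card_le
  · intro x hx
    simp only [Finset.mem_image] at hx
    obtain ⟨k, _, rfl⟩ := hx
    exact Finset.mem_range.mpr (Nat.mod_lt _ hb)
  · rw [Finset.card_image_of_injOn (mulmod_injOn a b h)]

lemma sum_mulmod {M : Type*} [AddCommMonoid M] (hb : 0 < b) (h : Nat.Coprime a b)
    (f : ℕ → M) :
    ∑ k ∈ range b, f (a * k % b) = ∑ k ∈ range b, f k := by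
  conv_rhs => rw [← mulmod_image a b hb h]
  rw [Finset.sum_image]
  intro x hx y hy hxy
  exact mulmod_injOn a b h (by simpa using hx) (by simpa using hy) hxy

end Helpers

lemma key_pt (a b i j : ℕ) (hb : 0 < b) (h : Nat.Coprime a b) (hij : i < j) (hj : j < b) :
    (if a * j % b < a * i % b then (b:ℤ) else 0)
      = ((a * (j - i) % b : ℕ) : ℤ) + ((a * i % b : ℕ) : ℤ) - ((a * j % b : ℕ) : ℤ) := by
  have hxlt : a * i % b < b := Nat.mod_lt _ hb
  have hylt : a * j % b < b := Nat.mod_lt _ hb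
  have hzlt : a * (j - i) % b < b := Nat.mod_lt _ hb
  have hsum : a * (j - i) + a * i = a * j := by
    rw [← Nat.mul_add, Nat.sub_add_cancel hij.le]
  have hmod : (a * (j - i) % b + a * i % b) % b = a * j % b := by
    rw [← Nat.add_mod, hsum]
  have hzne : a * (j - i) % b ≠ 0 := by
    intro h0
    have hd : b ∣ (j - i) :=
      Nat.Coprime.dvd_of_dvd_mul_left (h.symm) (Nat.dvd_of_mod_eq_zero h0)
    have h2 : 0 < j - i := by omega
    exact absurd (Nat.le_of_dvd h2 hd) (by omega)
  have hxy : a * i % b ≠ a * j % b := by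
    intro h0
    have hmeq : i ≡ j [MOD b] := (Nat.ModEq.cancel_left_of_coprime h.symm) h0
    have := Nat.ModEq.eq_of_lt_of_lt hmeq (by omega) hj
    omega
  have hkey : a * (j - i) % b + a * i % b = a * j % b
      ∨ a * (j - i) % b + a * i % b = b + a * j % b := by
    rcases Nat.lt_or_ge (a * (j - i) % b + a * i % b) b with hlt | hge
    · left; rw [← hmod, Nat.mod_eq_of_lt hlt]
    · right
      have h2 : (a * (j - i) % b + a * i % b) % b
          = a * (j - i) % b + a * i % b - b := by
        rw [Nat.mod_eq_sub_mod hge, Nat.mod_eq_of_lt (by omega)]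
      omega
  by_cases hc : a * j % b < a * i % b
  · rw [if_pos hc]; omega
  · rw [if_neg hc]; omega

lemma sum_pairs (b : ℕ) (f : ℕ → ℕ → ℤ) :
    ∑ p ∈ ((range b) ×ˢ (range b)).filter (fun p => p.1 < p.2), f p.1 p.2
      = ∑ j ∈ range b, ∑ i ∈ range j, f i j := by
  rw [Finset.sum_filter, Finset.sum_product_right]
  apply Finset.sum_congr rfl
  intro j hj
  rw [Finset.sum_ite, Finset.sum_const_zero, add_zero]
  apply Finset.sum_congr _ (fun _ _ => rfl)
  ext i
  simp only [Finset.mem_filter, Finset.mem_range] at *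
  omega

lemma triangle (b : ℕ) (h : ℕ → ℤ) :
    ∑ j ∈ range b, ∑ i ∈ range j, h i = ∑ i ∈ range b, ((b:ℤ) - 1 - i) * h i := by
  induction b with
  | zero => simp
  | succ n ih =>
    rw [Finset.sum_range_succ, ih, Finset.sum_range_succ]
    push_cast
    rw [show ((n:ℤ) + 1 - 1 - (n:ℤ)) * h n = 0 by ring, add_zero,
      ← Finset.sum_add_distrib]
    apply Finset.sum_congr rfl
    intro i _
    ring

lemma key_pt' (a b i j : ℕ) (hb : 0 < b) (h : Nat.Coprime a b) (hij : i < j) (hj : j < b) :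
    (if a * j % b < a * i % b then (b:ℤ) else 0)
      = ((a * (j - i) % b : ℕ) : ℤ) + ((a * i % b : ℕ) : ℤ) - ((a * j % b : ℕ) : ℤ) :=
  key_pt a b i j hb h hij hj

lemma shift_sum (a b : ℕ) :
    ∑ i ∈ range b, ((b:ℤ) - 1 - i) * ((a * (i+1) % b : ℕ) : ℤ)
      = ∑ i ∈ range b, ((b:ℤ) - i) * ((a * i % b : ℕ) : ℤ) := by
  have h0 : ((b:ℤ) - (0:ℕ)) * ((a * 0 % b : ℕ) : ℤ) = 0 := by simp
  have hb' : ((b:ℤ) - (b:ℕ)) * ((a * b % b : ℕ) : ℤ) = 0 := by simp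
  calc ∑ i ∈ range b, ((b:ℤ) - 1 - i) * ((a * (i+1) % b : ℕ) : ℤ)
      = ∑ i ∈ range b, ((b:ℤ) - (i+1:ℕ)) * ((a * (i+1) % b : ℕ) : ℤ) := by
        apply Finset.sum_congr rfl; intro i _; push_cast; ring
    _ = ∑ i ∈ range (b+1), ((b:ℤ) - (i:ℕ)) * ((a * i % b : ℕ) : ℤ) := by
        rw [Finset.sum_range_succ' (fun i => ((b:ℤ) - (i:ℕ)) * ((a * i % b : ℕ) : ℤ)) b, h0, add_zero]
    _ = ∑ i ∈ range b, ((b:ℤ) - (i:ℕ)) * ((a * i % b : ℕ) : ℤ) := by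
        rw [Finset.sum_range_succ, hb', add_zero]

lemma inv_formula (a b : ℕ) (hb : 0 < b) (h : Nat.Coprime a b) :
    (b:ℤ) * inv' a b = ∑ k ∈ range b, (2*(b:ℤ) - 1 - 3*k) * ((a * k % b : ℕ) : ℤ) := by
  have hcard : (inv' a b : ℤ)
      = ∑ p ∈ ((range b) ×ˢ (range b)).filter (fun p => p.1 < p.2),
          (if a * p.2 % b < a * p.1 % b then (1:ℤ) else 0) := by
    rw [inv', ← Finset.filter_filter]
    rw [Finset.card_filter]
    push_cast
    simp
  have step1 : (b:ℤ) * inv' a b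
      = ∑ p ∈ ((range b) ×ˢ (range b)).filter (fun p => p.1 < p.2),
          (if a * p.2 % b < a * p.1 % b then (b:ℤ) else 0) := by
    rw [hcard, Finset.mul_sum]
    apply Finset.sum_congr rfl
    intro p _
    split <;> ring
  rw [step1]
  have step2 : ∀ p ∈ ((range b) ×ˢ (range b)).filter (fun p => p.1 < p.2),
      (if a * p.2 % b < a * p.1 % b then (b:ℤ) else 0)
        = ((a * (p.2 - p.1) % b : ℕ) : ℤ) + ((a * p.1 % b : ℕ) : ℤ) - ((a * p.2 % b : ℕ) : ℤ) := by
    intro p hp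
    simp only [Finset.mem_filter, Finset.mem_product, Finset.mem_range] at hp
    exact key_pt a b p.1 p.2 hb h hp.2 hp.1.2
  rw [Finset.sum_congr rfl step2, sum_pairs b
    (fun i j => ((a * (j - i) % b : ℕ) : ℤ) + ((a * i % b : ℕ) : ℤ) - ((a * j % b : ℕ) : ℤ))]
  have inner : ∀ j ∈ range b,
      ∑ i ∈ range j, (((a * (j - i) % b : ℕ) : ℤ) + ((a * i % b : ℕ) : ℤ) - ((a * j % b : ℕ) : ℤ))
        = (∑ i ∈ range j, (((a * (i + 1) % b : ℕ) : ℤ) + ((a * i % b : ℕ) : ℤ)))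
            - (j:ℤ) * ((a * j % b : ℕ) : ℤ) := by
    intro j _
    rw [Finset.sum_sub_distrib, Finset.sum_const, Finset.card_range, nsmul_eq_mul]
    congr 1
    rw [Finset.sum_add_distrib, Finset.sum_add_distrib]
    congr 1
    rw [← Finset.sum_range_reflect (fun i => ((a * (j - i) % b : ℕ) : ℤ)) j]
    apply Finset.sum_congr rfl
    intro i hi
    simp only [Finset.mem_range] at hi
    have h1 : j - (j - 1 - i) = i + 1 := by omega
    rw [h1]
  rw [Finset.sum_congr rfl inner, Finset.sum_sub_distrib,
    triangle b (fun i => (((a * (i + 1) % b : ℕ) : ℤ) + ((a * i % b : ℕ) : ℤ)))]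
  have expand : ∑ i ∈ range b, ((b:ℤ) - 1 - i) * (((a * (i + 1) % b : ℕ) : ℤ) + ((a * i % b : ℕ) : ℤ))
      = ∑ i ∈ range b, (((b:ℤ) - 1 - i) * ((a * (i + 1) % b : ℕ) : ℤ)
          + ((b:ℤ) - 1 - i) * ((a * i % b : ℕ) : ℤ)) := by
    apply Finset.sum_congr rfl; intro i _; ring
  rw [expand, Finset.sum_add_distrib, shift_sum a b, ← Finset.sum_add_distrib,
    ← Finset.sum_sub_distrib]
  apply Finset.sum_congr rfl
  intro k _
  push_cast
  ring

lemma ded_formula (a b : ℕ) (hb : 0 < b) (h : Nat.Coprime a b) :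
    4 * (b:ℚ)^2 * dedekindSum a b
      = 4 * (∑ k ∈ range b, (k:ℚ) * ((a * k % b : ℕ) : ℚ)) - (b:ℚ)^2 * ((b:ℚ) - 1) := by
  have hbQ : (b:ℚ) ≠ 0 := by positivity
  set g : ℕ → ℚ := fun k => 4 * (b:ℚ)^2 * (saw ((k : ℚ) / b) * saw ((k * a : ℚ) / b)) with hg
  set G : ℕ → ℚ := fun k => (2*(k:ℚ) - b) * (2*((a * k % b : ℕ) : ℚ) - b) with hG
  have hgG : ∀ k ∈ Ico 1 b, g k = G k := by
    intro k hk
    simp only [Finset.mem_Ico] at hk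
    have hk1 : ¬ b ∣ k := by
      intro hd; have := Nat.le_of_dvd (by omega) hd; omega
    have hk2 : ¬ b ∣ k * a := by
      intro hd
      exact hk1 (Nat.Coprime.dvd_of_dvd_mul_right h.symm hd)
    have e1 : saw ((k : ℚ) / b) = ((k % b : ℕ) : ℚ) / b - 1/2 := saw_div k b hb hk1
    have e2 : saw ((k : ℚ) * (a:ℚ) / b) = ((k * a % b : ℕ) : ℚ) / b - 1/2 := by
      rw [← saw_div (k * a) b hb hk2]; congr 2; push_cast; ring
    have hkb : k % b = k := Nat.mod_eq_of_lt hk.2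
    have hmc : k * a % b = a * k % b := by rw [Nat.mul_comm]
    rw [hg, hG]
    simp only [Nat.cast_mul]
    rw [e1, e2, hkb, hmc]
    field_simp
    ring
  have hg0 : g 0 = 0 := by
    rw [hg]; simp [saw]
  have hG0 : G 0 = (b:ℚ)^2 := by
    rw [hG]; simp; ring
  have hsplit : ∑ k ∈ range b, g k = (∑ k ∈ range b, G k) - (b:ℚ)^2 := by
    rw [Finset.range_eq_Ico, Finset.sum_eq_sum_Ico_succ_bot hb g,
      Finset.sum_eq_sum_Ico_succ_bot hb G, hg0, hG0, zero_add,
      Finset.sum_congr rfl hgG]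
    ring
  have hlhs : 4 * (b:ℚ)^2 * dedekindSum a b = ∑ k ∈ range b, g k := by
    rw [dedekindSum, Finset.mul_sum]
  have hS1 : ∑ k ∈ range b, ((a * k % b : ℕ) : ℚ) = ∑ k ∈ range b, (k:ℚ) :=
    sum_mulmod a b hb h (fun k => (k:ℚ))
  have hgauss : (∑ k ∈ range b, (k:ℚ)) * 2 = (b:ℚ) * ((b:ℚ) - 1) := by
    rcases Nat.eq_zero_or_pos b with rfl | hb'
    · simp
    have h2 : ((∑ i ∈ range b, i) * 2 : ℕ) = (b * (b-1) : ℕ) := Finset.sum_range_id_mul_two b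
    have hcast : ((b:ℚ) - 1) = ((b - 1 : ℕ) : ℚ) := by
      have h1 : (1:ℕ) ≤ b := hb'
      push_cast [Nat.cast_sub h1]
      ring
    have h3 : ((∑ i ∈ range b, i : ℕ) : ℚ) * 2 = (b:ℚ) * ((b - 1 : ℕ) : ℚ) := by
      exact_mod_cast congrArg (fun n : ℕ => (n:ℚ)) h2
    rw [Nat.cast_sum] at h3
    rw [hcast]
    exact h3
  have hGpt : ∀ k ∈ range b, G k
      = ((4*((k:ℚ) * ((a * k % b : ℕ) : ℚ)) - 2*(b:ℚ)*(k:ℚ)) - 2*(b:ℚ)*((a * k % b : ℕ) : ℚ))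
        + (b:ℚ)^2 := by
    intro k _; rw [hG]; ring
  have hGsum : ∑ k ∈ range b, G k
      = 4 * (∑ k ∈ range b, (k:ℚ) * ((a * k % b : ℕ) : ℚ))
        - 2*(b:ℚ) * (∑ k ∈ range b, (k:ℚ))
        - 2*(b:ℚ) * (∑ k ∈ range b, ((a * k % b : ℕ) : ℚ))
        + (b:ℚ) * (b:ℚ)^2 := by
    rw [Finset.sum_congr rfl hGpt, Finset.sum_add_distrib, Finset.sum_sub_distrib,
      Finset.sum_sub_distrib, ← Finset.mul_sum, ← Finset.mul_sum, ← Finset.mul_sum,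
      Finset.sum_const, Finset.card_range, nsmul_eq_mul]
  rw [hlhs, hsplit, hGsum]
  linear_combination (-2*(b:ℚ))*hS1 + (-2*(b:ℚ))*hgauss

lemma main_id (a b : ℕ) (hb : 0 < b) (h : Nat.Coprime a b) :
    2 * (inv' a b : ℚ) + 6 * (b:ℚ) * dedekindSum a b = ((b:ℚ) - 1) * ((b:ℚ) - 2) / 2 := by
  have hbQ : (b:ℚ) ≠ 0 := by positivity
  have E1 : (b:ℚ) * (inv' a b : ℚ)
      = ∑ k ∈ range b, (2*(b:ℚ) - 1 - 3*k) * ((a * k % b : ℕ) : ℚ) := by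
    have := congrArg (fun z : ℤ => (z:ℚ)) (inv_formula a b hb h)
    push_cast at this
    convert this using 2
    congr 1
  have E2 : (b:ℚ) * (inv' a b : ℚ)
      = (2*(b:ℚ) - 1) * (∑ k ∈ range b, ((a * k % b : ℕ) : ℚ))
        - 3 * (∑ k ∈ range b, (k:ℚ) * ((a * k % b : ℕ) : ℚ)) := by
    rw [E1, Finset.mul_sum, Finset.mul_sum, ← Finset.sum_sub_distrib]
    apply Finset.sum_congr rfl
    intro k _
    ring
  have hS1 : ∑ k ∈ range b, ((a * k % b : ℕ) : ℚ) = ∑ k ∈ range b, (k:ℚ) :=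
    sum_mulmod a b hb h (fun k => (k:ℚ))
  have hgauss : (∑ k ∈ range b, (k:ℚ)) * 2 = (b:ℚ) * ((b:ℚ) - 1) := by
    have h2 : ((∑ i ∈ range b, i) * 2 : ℕ) = (b * (b-1) : ℕ) := Finset.sum_range_id_mul_two b
    have hcast : ((b:ℚ) - 1) = ((b - 1 : ℕ) : ℚ) := by
      have h1 : (1:ℕ) ≤ b := hb
      push_cast [Nat.cast_sub h1]
      ring
    have h3 : ((∑ i ∈ range b, i : ℕ) : ℚ) * 2 = (b:ℚ) * ((b - 1 : ℕ) : ℚ) := by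
      exact_mod_cast congrArg (fun n : ℕ => (n:ℚ)) h2
    rw [Nat.cast_sum] at h3
    rw [hcast]
    exact h3
  have F3 := ded_formula a b hb h
  have key : (b:ℚ) * (2 * (inv' a b : ℚ) + 6 * (b:ℚ) * dedekindSum a b
      - ((b:ℚ) - 1) * ((b:ℚ) - 2) / 2) = 0 := by
    linear_combination 2*E2 + (3/2)*F3 + (2*(2*(b:ℚ)-1))*hS1 + (2*(b:ℚ)-1)*hgauss
  rcases mul_eq_zero.mp key with hc | hc
  · exact absurd hc hbQ
  · linarith

theorem two_inv_congr_iff_six_int (a₁ a₂ b : ℕ) (ha₁ : 0 < a₁) (ha₂ : 0 < a₂) (hb : 0 < b)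
    (h₁ : Nat.Coprime a₁ b) (h₂ : Nat.Coprime a₂ b) :
    (2 * inv' a₁ b : ℤ) ≡ 2 * inv' a₂ b [ZMOD (b : ℤ)] ↔
      ∃ n : ℤ, 6 * dedekindSum a₁ b - 6 * dedekindSum a₂ b = n := by
  have hbQ : (b:ℚ) ≠ 0 := by positivity
  have k1 := main_id a₁ b hb h₁
  have k2 := main_id a₂ b hb h₂
  have hiff : 6 * dedekindSum a₁ b - 6 * dedekindSum a₂ b
      = (((2 * (inv' a₂ b : ℤ) - 2 * (inv' a₁ b : ℤ) : ℤ)) : ℚ) / b := by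
    push_cast
    field_simp
    linarith
  constructor
  · intro hm
    obtain ⟨k, hk⟩ := Int.ModEq.dvd hm
    refine ⟨k, ?_⟩
    rw [hiff, hk]
    push_cast
    field_simp
  · rintro ⟨n, hn⟩
    rw [hiff] at hn
    have h3 : ((2 * (inv' a₂ b : ℤ) - 2 * (inv' a₁ b : ℤ) : ℤ) : ℚ) = (((b:ℤ) * n : ℤ) : ℚ) := by
      push_cast at hn ⊢
      field_simp at hn
      linarith
    have h4 : (2 * (inv' a₂ b : ℤ) - 2 * (inv' a₁ b : ℤ) : ℤ) = (b:ℤ) * n := by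
      exact_mod_cast h3
    exact Int.modEq_iff_dvd.mpr ⟨n, h4⟩
end

section
/- Let a₁, a₂ be positive integers coprime to a positive integer b. Then 6·s(a₁,b) - 6·s(a₂,b) is an integer if and only if 2b divides (a₁-a₂)(b-1)(b+a₁a₂-1). -/
open Finset

private lemma saw_nat_div (m b : ℕ) (hb : 0 < b) (hnd : ¬ b ∣ m) :
    saw ((m:ℚ)/b) = ((m % b : ℕ) : ℚ)/b - 1/2 := by
  have hbq : (b:ℚ) ≠ 0 := by exact_mod_cast hb.ne'
  have hden : ((m:ℚ)/b).den ≠ 1 := by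
    intro hd
    have e : ((m:ℚ)/b) = ((m:ℤ):ℚ)/((b:ℤ):ℚ) := by push_cast; ring
    rw [e, Rat.den_div_intCast_eq_one_iff _ _ (by exact_mod_cast hb.ne')] at hd
    exact hnd (by exact_mod_cast hd)
  have hfl : ⌊(m:ℚ)/b⌋ = ((m / b : ℕ) : ℤ) := by
    rw [Rat.floor_natCast_div_natCast m b]; exact (Int.natCast_div m b).symm
  rw [saw, if_neg hden, hfl]
  have h := Nat.div_add_mod m b
  have h2 : (m:ℚ) = b * ((m/b : ℕ):ℚ) + ((m % b : ℕ):ℚ) := by exact_mod_cast h.symm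
  have h3 : (((m/b : ℕ):ℤ):ℚ) = ((m/b : ℕ):ℚ) := by norm_cast
  rw [h3]
  field_simp
  rw [h2]; ring

private lemma perm_sum {M : Type*} [AddCommMonoid M] (a b : ℕ) (h : Nat.Coprime a b)
    (hb : 0 < b) (g : ℕ → M) :
    ∑ k ∈ range b, g ((k*a) % b) = ∑ k ∈ range b, g k := by
  haveI : NeZero b := ⟨hb.ne'⟩
  set u := ZMod.unitOfCoprime a h with hu
  set a' : ℕ := ((u⁻¹ : (ZMod b)ˣ) : ZMod b).val with ha'
  have key : (a * a') % b = 1 % b := by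
    have h2 : ((a * a' : ℕ) : ZMod b) = 1 := by
      push_cast
      rw [ha', ZMod.natCast_val, ZMod.cast_id]
      have hua : ((u : (ZMod b)ˣ) : ZMod b) = (a : ZMod b) := ZMod.coe_unitOfCoprime a h
      rw [← hua, ← Units.val_mul, mul_inv_cancel, Units.val_one]
    calc a * a' % b = ((a*a' : ℕ) : ZMod b).val := (ZMod.val_natCast b _).symm
    _ = ((1:ℕ) : ZMod b).val := by rw [h2]; norm_cast
    _ = 1 % b := ZMod.val_natCast b _
  have key' : Nat.ModEq b (a*a') 1 := key
  apply Finset.sum_nbij' (fun k => (k*a) % b) (fun k => (k*a') % b)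
  · intro k _; exact Finset.mem_range.mpr (Nat.mod_lt _ hb)
  · intro k _; exact Finset.mem_range.mpr (Nat.mod_lt _ hb)
  · intro k hk
    have : (k*a % b) * a' % b = k % b := by
      rw [Nat.mod_mul_mod, mul_assoc]
      simpa [Nat.ModEq] using (Nat.ModEq.mul_left k key')
    exact this.trans (Nat.mod_eq_of_lt (Finset.mem_range.mp hk))
  · intro k hk
    have : (k*a' % b) * a % b = k % b := by
      rw [Nat.mod_mul_mod, mul_assoc, mul_comm a' a]
      simpa [Nat.ModEq] using (Nat.ModEq.mul_left k key')
    exact this.trans (Nat.mod_eq_of_lt (Finset.mem_range.mp hk))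
  · intro k _; rfl

private lemma sum_range_cast (b : ℕ) (hb : 0 < b) :
    ∑ k ∈ range b, (k:ℚ) = (b:ℚ)*((b:ℚ)-1)/2 := by
  have h := Finset.sum_range_id_mul_two b
  have h2 : ((∑ i ∈ range b, i : ℕ):ℚ) * 2 = ((b*(b-1) : ℕ):ℚ) := by
    exact_mod_cast congrArg (Nat.cast (R:=ℚ)) h
  push_cast [Nat.cast_sub hb] at h2
  linarith

private lemma ded_eq (a b : ℕ) (h : Nat.Coprime a b) (hb : 0 < b) :
    dedekindSum a b = (∑ k ∈ range b, (k:ℚ) * (((k*a) % b : ℕ):ℚ)) / (b:ℚ)^2 - ((b:ℚ)-1)/4 := by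
  have hbq : (b:ℚ) ≠ 0 := by exact_mod_cast hb.ne'
  set g : ℕ → ℚ := fun k => ((k:ℚ)/b - 1/2) * ((((k*a)%b : ℕ):ℚ)/b - 1/2) with hg
  have step1 : dedekindSum a b = ∑ k ∈ range b, g k - 1/4 := by
    rw [dedekindSum, Finset.range_eq_Ico, Finset.sum_eq_sum_Ico_succ_bot hb,
        Finset.sum_eq_sum_Ico_succ_bot hb (f := g)]
    have h0 : saw ((0:ℕ) / (b:ℚ)) * saw (((0:ℕ) * a : ℚ) / b) = 0 := by
      norm_num [saw]
    have hgz : g 0 = 1/4 := by simp [hg]; norm_num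
    rw [h0, hgz]
    have hcong : ∀ k ∈ Finset.Ico 1 b,
        saw ((k : ℚ) / b) * saw ((k * a : ℚ) / b) = g k := by
      intro k hk
      obtain ⟨hk1, hk2⟩ := Finset.mem_Ico.mp hk
      have hnd1 : ¬ b ∣ k := Nat.not_dvd_of_pos_of_lt hk1 hk2
      have hnd2 : ¬ b ∣ k * a := fun hd => hnd1 (h.symm.dvd_of_dvd_mul_right hd)
      have e1 : saw ((k:ℚ)/b) = (k:ℚ)/b - 1/2 := by
        rw [saw_nat_div k b hb hnd1, Nat.mod_eq_of_lt hk2]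
      have e2 : saw ((k * a : ℚ)/b) = (((k*a)%b : ℕ):ℚ)/b - 1/2 := by
        have : ((k:ℚ) * a) = ((k*a : ℕ):ℚ) := by push_cast; ring
        rw [this, saw_nat_div (k*a) b hb hnd2]
      rw [e1, e2]
    rw [Finset.sum_congr rfl hcong]
    ring
  have expand : ∀ k ∈ range b, g k =
      ((k:ℚ) * (((k*a)%b:ℕ):ℚ))/(b:ℚ)^2 - (k:ℚ)/(2*b) - (((k*a)%b:ℕ):ℚ)/(2*b) + 1/4 := by
    intro k _; rw [hg]; field_simp; ring
  rw [step1, Finset.sum_congr rfl expand]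
  have hr : ∑ k ∈ range b, (((k*a)%b:ℕ):ℚ) = ∑ k ∈ range b, (k:ℚ) :=
    perm_sum a b h hb (fun n => (n:ℚ))
  simp only [Finset.sum_add_distrib, Finset.sum_sub_distrib, ← Finset.sum_div,
    Finset.sum_const, Finset.card_range, nsmul_eq_mul]
  rw [hr, sum_range_cast b hb]
  field_simp
  ring

private lemma sq_sum (n:ℕ) : 6 * ∑ k ∈ range n, (k:ℤ)^2 = n*(n-1)*(2*n-1) := by
  induction n with
  | zero => simp
  | succ m ih => rw [Finset.sum_range_succ, mul_add, ih]; push_cast; ring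

private lemma E1 (a b : ℕ) :
    6 * ∑ k ∈ range b, (k:ℤ) * (((k*a)%b : ℕ):ℤ) =
      a*b*((b:ℤ)-1)*(2*b-1) - 6*b*∑ k ∈ range b, (k:ℤ) * (((k*a)/b : ℕ):ℤ) := by
  have key : ∀ k ∈ range b, (k:ℤ) * (((k*a)%b : ℕ):ℤ) =
      a*(k:ℤ)^2 - b*((k:ℤ)*(((k*a)/b : ℕ):ℤ)) := by
    intro k _
    have h := Nat.div_add_mod (k*a) b
    have h2 : (b:ℤ) * (((k*a)/b:ℕ):ℤ) + (((k*a)%b : ℕ):ℤ) = (k:ℤ)*a := by exact_mod_cast h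
    linear_combination (k:ℤ) * h2
  rw [Finset.sum_congr rfl key, Finset.sum_sub_distrib, ← Finset.mul_sum, ← Finset.mul_sum]
  have := sq_sum b
  linear_combination (a:ℤ) * this

private lemma E2 (a b : ℕ) (h : Nat.Coprime a b) (hb : 0 < b) :
    12 * a * ∑ k ∈ range b, (k:ℤ) * (((k*a)/b : ℕ):ℤ) =
      ((a:ℤ)^2-1)*((b:ℤ)-1)*(2*b-1) + 6*b*∑ k ∈ range b, ((((k*a)/b : ℕ):ℤ))^2 := by
  have hperm : ∑ k ∈ range b, ((((k*a)%b : ℕ):ℤ))^2 = ∑ k ∈ range b, (k:ℤ)^2 :=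
    perm_sum a b h hb (fun n => (n:ℤ)^2)
  have key : ∀ k ∈ range b, ((((k*a)%b : ℕ):ℤ))^2 =
      (a:ℤ)^2*(k:ℤ)^2 - 2*a*b*((k:ℤ)*(((k*a)/b : ℕ):ℤ)) + b^2*((((k*a)/b : ℕ):ℤ))^2 := by
    intro k _
    have h2 : (b:ℤ) * (((k*a)/b:ℕ):ℤ) + (((k*a)%b : ℕ):ℤ) = (k:ℤ)*a := by
      exact_mod_cast Nat.div_add_mod (k*a) b
    linear_combination ((((k*a)%b:ℕ):ℤ) + (k:ℤ)*a - b*(((k*a)/b:ℕ):ℤ)) * h2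
  rw [Finset.sum_congr rfl key] at hperm
  rw [Finset.sum_add_distrib, Finset.sum_sub_distrib, ← Finset.mul_sum, ← Finset.mul_sum,
    ← Finset.mul_sum] at hperm
  have hsq := sq_sum b
  have hbz : (b:ℤ) ≠ 0 := by exact_mod_cast hb.ne'
  apply mul_left_cancel₀ hbz
  linear_combination (a:ℤ)^2*hsq - hsq - 6*hperm +
    ((a:ℤ)^2*6 - 6)*(rfl : ∑ k ∈ range b, (k:ℤ)^2 = ∑ k ∈ range b, (k:ℤ)^2)

private lemma exists_int_div_iff (p q : ℤ) (hq : q ≠ 0) :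
    (∃ n : ℤ, ((p:ℚ))/((q:ℚ)) = n) ↔ q ∣ p := by
  constructor
  · rintro ⟨n, hn⟩
    have hq' : (q:ℚ) ≠ 0 := by exact_mod_cast hq
    have h3 : (p:ℚ) = ((q * n : ℤ) : ℚ) := by push_cast; field_simp at hn; linarith [hn]
    exact ⟨n, by exact_mod_cast h3⟩
  · rintro ⟨c, rfl⟩
    have hq' : (q:ℚ) ≠ 0 := by exact_mod_cast hq
    exact ⟨c, by push_cast; field_simp⟩

private lemma dvd_chain (a₁ a₂ b X T₁ T₂ U₁ U₂ : ℤ) (hb : 0 < b)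
    (hco1 : IsCoprime (a₁:ℤ) b) (hco2 : IsCoprime (a₂:ℤ) b)
    (hE1 : 12 * a₁ * T₁ = (a₁^2-1)*(b-1)*(2*b-1) + 6*b*U₁)
    (hE2 : 12 * a₂ * T₂ = (a₂^2-1)*(b-1)*(2*b-1) + 6*b*U₂)
    (hX : X = (a₁-a₂)*(b-1)*(2*b-1) - 6*(T₁-T₂))
    (hpar : 2 ∣ (a₁-a₂)*(b-1)) :
    (b ∣ X) ↔ (2*b) ∣ (a₁-a₂)*(b-1)*(b+a₁*a₂-1) := by
  have hbz : b ≠ 0 := hb.ne'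
  have hco : IsCoprime (a₁*a₂) b := hco1.mul_left hco2
  have step1 : b ∣ X ↔ b ∣ a₁*a₂*X :=
    ⟨fun hd => hd.mul_left _, fun hd => hco.symm.dvd_of_dvd_mul_left hd⟩
  have step2 : b ∣ a₁*a₂*X ↔ 12*b ∣ 12*(a₁*a₂*X) :=
    (mul_dvd_mul_iff_left (by norm_num : (12:ℤ) ≠ 0)).symm
  have key : 12*(a₁*a₂*X) = 6*((a₁-a₂)*(a₁*a₂-1)*(b-1)*(2*b-1) + 6*b*(a₁*U₂ - a₂*U₁)) := by
    rw [hX]; linear_combination (-6*a₂)*hE1 + (6*a₁)*hE2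
  have step3 : 12*b ∣ 12*(a₁*a₂*X) ↔
      2*b ∣ (a₁-a₂)*(a₁*a₂-1)*(b-1)*(2*b-1) + 6*b*(a₁*U₂ - a₂*U₁) := by
    rw [key, show (12:ℤ)*b = 6*(2*b) by ring]
    exact mul_dvd_mul_iff_left (by norm_num : (6:ℤ) ≠ 0)
  have step4 : 2*b ∣ (a₁-a₂)*(a₁*a₂-1)*(b-1)*(2*b-1) + 6*b*(a₁*U₂ - a₂*U₁) ↔
      2*b ∣ (a₁-a₂)*(a₁*a₂-1)*(b-1)*(2*b-1) := by
    have : 2*b ∣ 6*b*(a₁*U₂ - a₂*U₁) := ⟨3*(a₁*U₂ - a₂*U₁), by ring⟩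
    rw [add_comm]; exact dvd_add_right this
  have hcop2b : IsCoprime (2*b-1) (2*b) := ⟨-1, 1, by ring⟩
  have step5 : 2*b ∣ (a₁-a₂)*(a₁*a₂-1)*(b-1)*(2*b-1) ↔ 2*b ∣ (a₁-a₂)*(a₁*a₂-1)*(b-1) :=
    ⟨fun hd => (hcop2b.symm.dvd_of_dvd_mul_right hd), fun hd => hd.mul_right _⟩
  have step6 : 2*b ∣ (a₁-a₂)*(a₁*a₂-1)*(b-1) ↔ 2*b ∣ (a₁-a₂)*(b-1)*(b+a₁*a₂-1) := by
    obtain ⟨m, hm⟩ := hpar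
    constructor <;> intro ⟨c, hc⟩
    · exact ⟨c + m, by linear_combination hc + b*hm⟩
    · exact ⟨c - m, by linear_combination hc - b*hm⟩
  rw [step1, step2, step3, step4, step5, step6]

theorem six_int_iff_dvd (a₁ a₂ b : ℕ) (ha₁ : 0 < a₁) (ha₂ : 0 < a₂) (hb : 0 < b)
    (h₁ : Nat.Coprime a₁ b) (h₂ : Nat.Coprime a₂ b) :
    (∃ n : ℤ, 6 * dedekindSum a₁ b - 6 * dedekindSum a₂ b = n) ↔
      (2 * b : ℤ) ∣ ((a₁ : ℤ) - a₂) * ((b : ℤ) - 1) * ((b : ℤ) + (a₁ : ℤ) * a₂ - 1) := by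
  have hbz : (b:ℤ) ≠ 0 := by exact_mod_cast hb.ne'
  set S₁ : ℤ := ∑ k ∈ range b, (k:ℤ) * (((k*a₁)%b : ℕ):ℤ) with hS1
  set S₂ : ℤ := ∑ k ∈ range b, (k:ℤ) * (((k*a₂)%b : ℕ):ℤ) with hS2
  set T₁ : ℤ := ∑ k ∈ range b, (k:ℤ) * (((k*a₁)/b : ℕ):ℤ) with hT1
  set T₂ : ℤ := ∑ k ∈ range b, (k:ℤ) * (((k*a₂)/b : ℕ):ℤ) with hT2
  set U₁ : ℤ := ∑ k ∈ range b, ((((k*a₁)/b : ℕ):ℤ))^2 with hU1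
  set U₂ : ℤ := ∑ k ∈ range b, ((((k*a₂)/b : ℕ):ℤ))^2 with hU2
  -- rewrite the LHS as a single rational division
  have hcast1 : ((S₁:ℤ):ℚ) = ∑ k ∈ range b, (k:ℚ) * (((k*a₁)%b : ℕ):ℚ) := by
    rw [hS1]; push_cast; rfl
  have hcast2 : ((S₂:ℤ):ℚ) = ∑ k ∈ range b, (k:ℚ) * (((k*a₂)%b : ℕ):ℚ) := by
    rw [hS2]; push_cast; rfl
  have heq : 6 * dedekindSum a₁ b - 6 * dedekindSum a₂ b
      = (((6*(S₁ - S₂) : ℤ)):ℚ) / (((b:ℤ)^2 : ℤ):ℚ) := by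
    rw [ded_eq a₁ b h₁ hb, ded_eq a₂ b h₂ hb]
    push_cast [← hcast1, ← hcast2]
    have hbq : (b:ℚ) ≠ 0 := by exact_mod_cast hb.ne'
    field_simp
    ring
  rw [heq, exists_int_div_iff _ _ (pow_ne_zero 2 hbz)]
  -- reduce to divisibility of X
  set X : ℤ := ((a₁:ℤ)-a₂)*((b:ℤ)-1)*(2*b-1) - 6*(T₁-T₂) with hXdef
  have hSX : 6*(S₁ - S₂) = b * X := by
    have e1 := E1 a₁ b
    have e2 := E1 a₂ b
    rw [← hS1, ← hT1] at e1
    rw [← hS2, ← hT2] at e2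
    rw [hXdef]; linear_combination e1 - e2
  have hred : (b:ℤ)^2 ∣ 6*(S₁ - S₂) ↔ (b:ℤ) ∣ X := by
    rw [hSX, pow_two]
    exact mul_dvd_mul_iff_left hbz
  rw [hred]
  -- parity fact
  have hpar : (2:ℤ) ∣ ((a₁:ℤ)-a₂)*((b:ℤ)-1) := by
    rcases Nat.even_or_odd b with hbe | hbo
    · obtain ⟨c, hc⟩ := hbe
      have hodd1 : ¬ 2 ∣ a₁ := fun hd => by
        have hd2 : (2:ℕ) ∣ 1 := h₁ ▸ Nat.dvd_gcd hd ⟨c, by omega⟩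
        norm_num at hd2
      have hodd2 : ¬ 2 ∣ a₂ := fun hd => by
        have hd2 : (2:ℕ) ∣ 1 := h₂ ▸ Nat.dvd_gcd hd ⟨c, by omega⟩
        norm_num at hd2
      have : (2:ℤ) ∣ (a₁:ℤ) - a₂ := by omega
      obtain ⟨m, hm⟩ := this
      exact ⟨m*((b:ℤ)-1), by rw [hm]; ring⟩
    · have : (2:ℤ) ∣ (b:ℤ) - 1 := by
        obtain ⟨c, hc⟩ := hbo; omega
      obtain ⟨m, hm⟩ := this
      exact ⟨((a₁:ℤ)-a₂)*m, by rw [hm]; ring⟩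
  -- apply the chain
  have e21 := E2 a₁ b h₁ hb
  have e22 := E2 a₂ b h₂ hb
  rw [← hT1, ← hU1] at e21
  rw [← hT2, ← hU2] at e22
  exact dvd_chain (a₁:ℤ) (a₂:ℤ) (b:ℤ) X T₁ T₂ U₁ U₂ (by exact_mod_cast hb)
    (Nat.isCoprime_iff_coprime.mpr h₁) (Nat.isCoprime_iff_coprime.mpr h₂)
    (by linear_combination e21) (by linear_combination e22) hXdef hpar
end
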